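/- arXiv:0910.4991 — 2 statements merged into one kernel-verified Lean document; each statement's English description precedes it below -/
import Mathlib

section
/- Let α ≥ 0, β ∈ (0,1], and λ ≥ e^{(3+2α)/β}. Define φ : (0,∞) → ℝ by φ(r) = r^β / (log(λ+r))^α. Then φ''(r) ≤ 0 for all r > 0. -/
lemma key6 (α β L t : ℝ) (hα : 0 ≤ α) (hβ0 : 0 < β) (hβ1 : β ≤ 1)
    (hL : 3 + 2*α ≤ β*L) (ht0 : 0 ≤ t) (ht1 : t ≤ 1) :
    β*(β-1)*L^2 - 2*α*β*L*t + α*(α+1)*t^2 + α*L*t^2 ≤ 0 := by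
  have hLpos : 0 < L := by nlinarith
  have hL2 : 3 + 2*α ≤ L := by nlinarith
  have hB : α*L + α*(α+1) - 2*α*β*L ≤ β*(1-β)*L^2 := by
    nlinarith [mul_nonneg (mul_nonneg (sub_nonneg.2 hβ1) hLpos.le) (sub_nonneg.2 hL),
      mul_nonneg hα (sub_nonneg.2 (by linarith : α + 1 ≤ L))]
  rcases le_or_gt 0 (α*L + α*(α+1) - 2*α*β*L) with h | h
  · nlinarith [mul_nonneg (mul_nonneg hα hLpos.le) (mul_nonneg ht0 (sub_nonneg.2 ht1)),
      mul_nonneg (mul_nonneg hα (by linarith : (0:ℝ) ≤ α+1)) (mul_nonneg ht0 (sub_nonneg.2 ht1)),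
      mul_nonneg (sub_nonneg.2 ht1) h]
  · nlinarith [mul_nonneg (mul_nonneg hα hLpos.le) (mul_nonneg ht0 (sub_nonneg.2 ht1)),
      mul_nonneg (mul_nonneg hα (by linarith : (0:ℝ) ≤ α+1)) (mul_nonneg ht0 (sub_nonneg.2 ht1)),
      mul_nonpos_of_nonneg_of_nonpos ht0 h.le,
      mul_nonneg (mul_nonneg hβ0.le (sub_nonneg.2 hβ1)) (sq_nonneg L)]

/-- For `α ≥ 0`, `β ∈ (0,1]`, `λ ≥ e^{(3+2α)/β}`, the function
`φ(r) = r^β / (log(λ+r))^α` has nonpositive second derivative on `(0,∞)`. -/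
theorem stmt6 (α β lam : ℝ) (hα : 0 ≤ α) (hβ0 : 0 < β) (hβ1 : β ≤ 1)
    (hlam : Real.exp ((3 + 2 * α) / β) ≤ lam) :
    ∀ r > (0 : ℝ),
      deriv (deriv (fun r : ℝ => r ^ β / (Real.log (lam + r)) ^ α)) r ≤ 0 := by
  have hc : 0 < (3 + 2 * α) / β := div_pos (by linarith) hβ0
  have hlam1 : 1 < lam := by
    calc (1:ℝ) = Real.exp 0 := Real.exp_zero.symm
    _ < Real.exp ((3 + 2 * α) / β) := Real.exp_lt_exp.mpr hc
    _ ≤ lam := hlam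
  -- auxiliary positivity facts
  have hAux : ∀ s : ℝ, 0 < s → 0 < lam + s ∧ 0 < Real.log (lam + s) := by
    intro s hs
    exact ⟨by linarith, Real.log_pos (by linarith)⟩
  set ψ : ℝ → ℝ := fun s => s ^ β * (Real.log (lam + s)) ^ (-α) with hψdef
  set g : ℝ → ℝ := fun s => β * s ^ (β - 1) * (Real.log (lam + s)) ^ (-α)
      + s ^ β * ((lam + s)⁻¹ * -α * (Real.log (lam + s)) ^ (-α - 1)) with hgdef
  have hg : ∀ s : ℝ, 0 < s → HasDerivAt ψ (g s) s := by
    intro s hs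
    obtain ⟨hA, hL⟩ := hAux s hs
    have h1 : HasDerivAt (fun x : ℝ => x ^ β) (β * s ^ (β - 1)) s :=
      Real.hasDerivAt_rpow_const (Or.inl hs.ne')
    have h2 : HasDerivAt (fun x : ℝ => lam + x) 1 s := (hasDerivAt_id s).const_add lam
    have h3 : HasDerivAt (fun x : ℝ => Real.log (lam + x)) (1 / (lam + s)) s :=
      h2.log hA.ne'
    have h4 := h3.rpow_const (p := -α) (Or.inl hL.ne')
    rw [one_div] at h4
    exact h1.mul h4
  intro r hr
  obtain ⟨hA, hL⟩ := hAux r hr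
  -- move to ψ and g
  have hev1 : (fun s : ℝ => s ^ β / (Real.log (lam + s)) ^ α) =ᶠ[nhds r] ψ := by
    filter_upwards [isOpen_Ioi.mem_nhds (show r ∈ Set.Ioi (0:ℝ) from hr)] with s hs
    obtain ⟨hA', hL'⟩ := hAux s hs
    rw [hψdef]
    simp only [Real.rpow_neg hL'.le, div_eq_mul_inv]
  have hev2 : deriv (fun s : ℝ => s ^ β / (Real.log (lam + s)) ^ α) =ᶠ[nhds r] g := by
    refine hev1.deriv.trans ?_
    filter_upwards [isOpen_Ioi.mem_nhds (show r ∈ Set.Ioi (0:ℝ) from hr)] with s hs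
    exact (hg s hs).deriv
  rw [hev2.deriv_eq]
  -- compute deriv g r
  have h1 : HasDerivAt (fun x : ℝ => x ^ β) (β * r ^ (β - 1)) r :=
    Real.hasDerivAt_rpow_const (Or.inl hr.ne')
  have h1' : HasDerivAt (fun x : ℝ => x ^ (β - 1)) ((β - 1) * r ^ (β - 1 - 1)) r :=
    Real.hasDerivAt_rpow_const (Or.inl hr.ne')
  have h2 : HasDerivAt (fun x : ℝ => lam + x) 1 r := (hasDerivAt_id r).const_add lam
  have h3 : HasDerivAt (fun x : ℝ => Real.log (lam + x)) (1 / (lam + r)) r := h2.log hA.ne'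
  have h4 := h3.rpow_const (p := -α) (Or.inl hL.ne')
  rw [one_div] at h4
  have h5 := h3.rpow_const (p := -α - 1) (Or.inl hL.ne')
  rw [one_div] at h5
  have hB1 : HasDerivAt (fun x : ℝ => (lam + x)⁻¹) (-1 / (lam + r) ^ 2) r := h2.inv hA.ne'
  have hB2 : HasDerivAt (fun x : ℝ => (lam + x)⁻¹ * -α) (-1 / (lam + r) ^ 2 * -α) r :=
    hB1.mul_const (-α)
  have hB3 := hB2.mul h5
  have hTermA := (h1'.const_mul β).mul h4
  have hTermB := h1.mul hB3
  have hG := hTermA.add hTermB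
  have hG' : HasDerivAt g _ r := hG.congr_of_eventuallyEq (Filter.Eventually.of_forall fun x => rfl)
  rw [hG'.deriv]
  simp only [Pi.mul_apply]
  -- now bound the explicit expression
  set L := Real.log (lam + r) with hLdef
  set A := lam + r with hAdef
  have hL3 : 3 + 2 * α ≤ β * L := by
    have h0 : (3 + 2 * α) / β ≤ Real.log lam := by
      rw [← Real.log_exp ((3 + 2 * α) / β)]
      exact Real.log_le_log (Real.exp_pos _) hlam
    have h1 : Real.log lam ≤ L := Real.log_le_log (by linarith) (by linarith)
    calc 3 + 2 * α = β * ((3 + 2 * α) / β) := by field_simp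
    _ ≤ β * L := by nlinarith
  have ht0 : 0 ≤ r / A := le_of_lt (div_pos hr hA)
  have ht1 : r / A ≤ 1 := by
    rw [div_le_one hA]; linarith
  have hkey := key6 α β L (r / A) hα hβ0 hβ1 hL3 ht0 ht1
  -- rpow exponent rewrites
  have e0 : r ^ (β - 1 - 1) = r ^ (β - 2) := by rw [show β - 1 - 1 = β - 2 by ring]
  have e1 : r ^ (β - 1) = r ^ (β - 2) * r := by
    rw [show β - 1 = (β - 2) + 1 by ring, Real.rpow_add hr, Real.rpow_one]
  have e2 : r ^ β = r ^ (β - 2) * r ^ 2 := by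
    rw [show β = (β - 2) + 2 by ring, Real.rpow_add hr]
    norm_num [Real.rpow_natCast]
  have f0 : L ^ (-α) = L ^ (-α - 2) * L ^ 2 := by
    rw [show -α = (-α - 2) + 2 by ring, Real.rpow_add hL]
    norm_num [Real.rpow_natCast]
  have f1 : L ^ (-α - 1) = L ^ (-α - 2) * L := by
    rw [show -α - 1 = (-α - 2) + 1 by ring, Real.rpow_add hL, Real.rpow_one]
  have f2 : L ^ (-α - 1 - 1) = L ^ (-α - 2) := by rw [show -α - 1 - 1 = -α - 2 by ring]
  rw [e0, e1, e2, f0, f1, f2]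
  have hfact : β * ((β - 1) * r ^ (β - 2)) * (L ^ (-α - 2) * L ^ 2)
      + β * (r ^ (β - 2) * r) * (A⁻¹ * -α * (L ^ (-α - 2) * L))
      + (β * (r ^ (β - 2) * r) * (A⁻¹ * -α * (L ^ (-α - 2) * L))
        + r ^ (β - 2) * r ^ 2 * (-1 / A ^ 2 * -α * (L ^ (-α - 2) * L)
          + A⁻¹ * -α * (A⁻¹ * (-α - 1) * L ^ (-α - 2))))
      = (r ^ (β - 2) * L ^ (-α - 2)) *
        (β*(β-1)*L^2 - 2*α*β*L*(r/A) + α*(α+1)*(r/A)^2 + α*L*(r/A)^2) := by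
    field_simp
    ring
  rw [hfact]
  exact mul_nonpos_of_nonneg_of_nonpos (by positivity) hkey
end

section
/- Let α ≥ 0, β ∈ (0,1], and λ ≥ e^{(3+2α)/β}. Define φ : (0,∞) → ℝ by φ(r) = r^β / (log(λ+r))^α. Then the third derivative φ'''(r) ≥ 0 for all r > 0. -/
open Filter

/-- auxiliary basis function `x^p * (log(lam+x))^q * (lam+x)^m`. -/
noncomputable def stmt7T (lam p q m x : ℝ) : ℝ :=
  x ^ p * Real.log (lam + x) ^ q * (lam + x) ^ m

lemma stmt7T_hasDerivAt (lam p q m r : ℝ) (hlam : 1 < lam) (hr : 0 < r) :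
    HasDerivAt (fun x => stmt7T lam p q m x)
      (p * stmt7T lam (p - 1) q m r + q * stmt7T lam p (q - 1) (m - 1) r
        + m * stmt7T lam p q (m - 1) r) r := by
  have hu : 0 < lam + r := by linarith
  have hu1 : 1 < lam + r := by linarith
  have hL : 0 < Real.log (lam + r) := Real.log_pos hu1
  have h_add : HasDerivAt (fun x : ℝ => lam + x) 1 r := by
    simpa using (hasDerivAt_id r).const_add lam
  have h_rp : HasDerivAt (fun x : ℝ => x ^ p) (p * r ^ (p - 1)) r :=
    Real.hasDerivAt_rpow_const (Or.inl hr.ne')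
  have h_log : HasDerivAt (fun x : ℝ => Real.log (lam + x)) ((lam + r)⁻¹) r := by
    simpa [Function.comp_def] using (Real.hasDerivAt_log hu.ne').comp r h_add
  have h_Lq : HasDerivAt (fun x : ℝ => Real.log (lam + x) ^ q)
      (q * Real.log (lam + r) ^ (q - 1) * (lam + r)⁻¹) r := by
    have := (Real.hasDerivAt_rpow_const (p := q) (Or.inl hL.ne')).comp r h_log
    simpa [Function.comp_def] using this
  have h_um : HasDerivAt (fun x : ℝ => (lam + x) ^ m) (m * (lam + r) ^ (m - 1)) r := by
    have := (Real.hasDerivAt_rpow_const (p := m) (Or.inl hu.ne')).comp r h_add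
    simpa [Function.comp_def] using this
  have h := (h_rp.mul h_Lq).mul h_um
  unfold stmt7T
  refine h.congr_deriv ?_
  rw [show m - 1 = m + (-1) by ring, Real.rpow_add hu, Real.rpow_neg_one]
  simp only [Pi.mul_apply]
  ring

/-- Step E : the core reduced polynomial inequality. -/
lemma stmt7_stepE (a c t : ℝ) (ha : 0 ≤ a) (hc0 : 0 ≤ c) (hc1 : c ≤ 1)
    (ht : 3 + 2 * a ≤ t) :
    0 ≤ a * t ^ 2 + (3 + a) * c * t ^ 2 - 3 * a * (a + 1) * c * t - a * (a + 1) * (a + 2) := by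
  have ht' : (0:ℝ) ≤ t - (3 + 2 * a) := by linarith
  have ht0 : (0:ℝ) < t := by linarith
  have q1 : 0 ≤ (3 + a) * c * t * (t - (3 + 2 * a)) :=
    mul_nonneg (mul_nonneg (mul_nonneg (by linarith) hc0) ht0.le) ht'
  have q2 : 0 ≤ a * t * (t - (3 + 2 * a)) := mul_nonneg (mul_nonneg ha ht0.le) ht'
  have hK : 0 ≤ a * (3 + 2 * a) + (9 + 6 * a - a ^ 2) * c := by
    rcases le_or_gt (a ^ 2) (9 + 6 * a) with h | h
    · nlinarith [mul_nonneg (sub_nonneg.2 h) hc0]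
    · nlinarith [mul_nonneg (sub_nonneg.2 h.le) (sub_nonneg.2 hc1)]
  have q3 : 0 ≤ (a * (3 + 2 * a) + (9 + 6 * a - a ^ 2) * c) * (t - (3 + 2 * a)) :=
    mul_nonneg hK ht'
  have q4 : a * (a + 1) * (a + 2) ≤ (a * (3 + 2 * a) + (9 + 6 * a - a ^ 2) * c) * (3 + 2 * a) := by
    rcases le_or_gt (a ^ 2) (9 + 6 * a) with h | h
    · nlinarith [mul_nonneg (mul_nonneg (sub_nonneg.2 h) hc0) ha,
        mul_nonneg (sub_nonneg.2 h) hc0]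
    · nlinarith [mul_nonneg (mul_nonneg (sub_nonneg.2 h.le) (sub_nonneg.2 hc1)) ha,
        mul_nonneg (sub_nonneg.2 h.le) (sub_nonneg.2 hc1)]
  nlinarith [q1, q2, q3, q4]

/-- The key cubic polynomial inequality in `L`. -/
lemma stmt7_keyP (a b L : ℝ) (ha : 0 ≤ a) (hb0 : 0 < b) (hb1 : b ≤ 1)
    (hbL : 3 + 2 * a ≤ b * L) :
    0 ≤ b * (1 - b) * (2 - b) * L ^ 3 + (6 * a * b - 3 * a * b ^ 2 - 2 * a) * L ^ 2
      - 3 * a * (a + 1) * (1 - b) * L - a * (a + 1) * (a + 2) := by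
  have hc0 : 0 ≤ 1 - b := by linarith
  have hc1 : 1 - b ≤ 1 := by linarith
  have hS := stmt7_stepE a (1 - b) (b * L) ha hc0 hc1 hbL
  have ht' : 0 ≤ b * L - (3 + 2 * a) := by linarith
  have d1 : 0 ≤ (1 - b) * (b * L) ^ 2 * (b * L - (3 + 2 * a)) :=
    mul_nonneg (mul_nonneg hc0 (sq_nonneg _)) ht'
  have d2 : 0 ≤ (1 - b) ^ 2 * (b * L) ^ 2 * (b * L - (3 + 2 * a)) :=
    mul_nonneg (mul_nonneg (sq_nonneg _) (sq_nonneg _)) ht'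
  have d3 : 0 ≤ a * (1 - b) * (1 - (1 - b)) * (b * L) ^ 2 :=
    mul_nonneg (mul_nonneg (mul_nonneg ha hc0) (by linarith)) (sq_nonneg _)
  have d4 : 0 ≤ 3 * (1 - b) ^ 2 * (b * L) ^ 2 := by positivity
  have d5 : 0 ≤ 3 * a * (a + 1) * (1 - b) ^ 2 * (b * L) := by
    have h0 : (0:ℝ) < b * L := by linarith
    positivity
  have d6 : 0 ≤ a * (a + 1) * (a + 2) * (1 - b) * (2 - (1 - b)) :=
    mul_nonneg (mul_nonneg (mul_nonneg (mul_nonneg ha (by linarith)) (by linarith)) hc0)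
      (by linarith)
  have hR : 0 ≤ (1 - b) * (1 + (1 - b)) * (b * L) ^ 3
      + a * (1 - 3 * (1 - b) ^ 2) * (b * L) ^ 2
      - 3 * a * (a + 1) * (1 - b) * (1 - (1 - b)) * (b * L)
      - a * (a + 1) * (a + 2) * (1 - (1 - b)) ^ 2 := by
    nlinarith [hS, d1, d2, d3, d4, d5, d6]
  have hb2 : (0:ℝ) < b ^ 2 := by positivity
  by_contra hP
  push_neg at hP
  have hneg : 0 < b ^ 2 * (-(b * (1 - b) * (2 - b) * L ^ 3
      + (6 * a * b - 3 * a * b ^ 2 - 2 * a) * L ^ 2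
      - 3 * a * (a + 1) * (1 - b) * L - a * (a + 1) * (a + 2))) :=
    mul_pos hb2 (by linarith)
  linarith [hR, hneg]

set_option maxHeartbeats 1000000 in
/-- For `α ≥ 0`, `β ∈ (0,1]`, `λ ≥ e^{(3+2α)/β}`, the function
`φ(r) = r^β / (log(λ+r))^α` has nonnegative third derivative on `(0,∞)`. -/
theorem stmt7 (α β lam : ℝ) (hα : 0 ≤ α) (hβ0 : 0 < β) (hβ1 : β ≤ 1)
    (hlam : Real.exp ((3 + 2 * α) / β) ≤ lam) :
    ∀ r > (0 : ℝ),
      0 ≤ deriv (deriv (deriv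
        (fun r : ℝ => r ^ β / (Real.log (lam + r)) ^ α))) r := by
  have hlam1 : 1 < lam := by
    have h0 : (0:ℝ) < (3 + 2 * α) / β := by positivity
    have : (1:ℝ) < Real.exp ((3 + 2 * α) / β) := by
      calc (1:ℝ) = Real.exp 0 := by simp
      _ < Real.exp ((3 + 2 * α) / β) := Real.exp_lt_exp.mpr h0
    linarith
  -- first derivative
  have hD0 : ∀ x : ℝ, 0 < x →
      HasDerivAt (fun y : ℝ => y ^ β / (Real.log (lam + y)) ^ α)
        (β * stmt7T lam (β - 1) (-α) 0 x + (-α) * stmt7T lam β (-α - 1) (-1) x) x := by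
    intro x hx
    have h := stmt7T_hasDerivAt lam β (-α) 0 x hlam1 hx
    have heq : (fun y : ℝ => y ^ β / (Real.log (lam + y)) ^ α)
        =ᶠ[nhds x] (fun y => stmt7T lam β (-α) 0 y) := by
      filter_upwards [Ioi_mem_nhds hx] with y hy
      have hy0 : (0:ℝ) < y := hy
      have hL0 : 0 ≤ Real.log (lam + y) := Real.log_nonneg (by linarith)
      unfold stmt7T
      rw [Real.rpow_zero, Real.rpow_neg hL0, mul_one, div_eq_mul_inv]
    have h2 := h.congr_of_eventuallyEq heq
    refine h2.congr_deriv ?_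
    rw [show (0:ℝ) - 1 = -1 by ring]
    ring
  -- second derivative
  have hD1 : ∀ x : ℝ, 0 < x →
      HasDerivAt (fun y : ℝ => β * stmt7T lam (β - 1) (-α) 0 y
          + (-α) * stmt7T lam β (-α - 1) (-1) y)
        (β * (β - 1) * stmt7T lam (β - 2) (-α) 0 x
          + (-(2 * α * β)) * stmt7T lam (β - 1) (-α - 1) (-1) x
          + α * (α + 1) * stmt7T lam β (-α - 2) (-2) x
          + α * stmt7T lam β (-α - 1) (-2) x) x := by
    intro x hx
    have h := ((stmt7T_hasDerivAt lam (β - 1) (-α) 0 x hlam1 hx).const_mul β).add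
      ((stmt7T_hasDerivAt lam β (-α - 1) (-1) x hlam1 hx).const_mul (-α))
    refine h.congr_deriv ?_
    rw [show β - 1 - 1 = β - 2 by ring, show (0:ℝ) - 1 = -1 by ring,
      show -α - 1 - 1 = -α - 2 by ring, show (-1:ℝ) - 1 = -2 by ring]
    ring
  -- third derivative
  have hD2 : ∀ x : ℝ, 0 < x →
      HasDerivAt (fun y : ℝ => β * (β - 1) * stmt7T lam (β - 2) (-α) 0 y
          + (-(2 * α * β)) * stmt7T lam (β - 1) (-α - 1) (-1) y
          + α * (α + 1) * stmt7T lam β (-α - 2) (-2) y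
          + α * stmt7T lam β (-α - 1) (-2) y)
        (β * (β - 1) * (β - 2) * stmt7T lam (β - 3) (-α) 0 x
          + (-(3 * α * β * (β - 1))) * stmt7T lam (β - 2) (-α - 1) (-1) x
          + 3 * α * β * (α + 1) * stmt7T lam (β - 1) (-α - 2) (-2) x
          + 3 * α * β * stmt7T lam (β - 1) (-α - 1) (-2) x
          + (-(α * (α + 1) * (α + 2))) * stmt7T lam β (-α - 3) (-3) x
          + (-(3 * α * (α + 1))) * stmt7T lam β (-α - 2) (-3) x
          + (-(2 * α)) * stmt7T lam β (-α - 1) (-3) x) x := by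
    intro x hx
    have h := ((((stmt7T_hasDerivAt lam (β - 2) (-α) 0 x hlam1 hx).const_mul (β * (β - 1))).add
      ((stmt7T_hasDerivAt lam (β - 1) (-α - 1) (-1) x hlam1 hx).const_mul (-(2 * α * β)))).add
      ((stmt7T_hasDerivAt lam β (-α - 2) (-2) x hlam1 hx).const_mul (α * (α + 1)))).add
      ((stmt7T_hasDerivAt lam β (-α - 1) (-2) x hlam1 hx).const_mul α)
    refine h.congr_deriv ?_
    rw [show β - 2 - 1 = β - 3 by ring, show (0:ℝ) - 1 = -1 by ring,
      show β - 1 - 1 = β - 2 by ring, show -α - 1 - 1 = -α - 2 by ring,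
      show (-1:ℝ) - 1 = -2 by ring, show -α - 2 - 1 = -α - 3 by ring,
      show (-2:ℝ) - 1 = -3 by ring]
    ring
  intro r hr
  -- rewrite the triple deriv
  have E1 : deriv (fun y : ℝ => y ^ β / (Real.log (lam + y)) ^ α)
      =ᶠ[nhds r] (fun y : ℝ => β * stmt7T lam (β - 1) (-α) 0 y
          + (-α) * stmt7T lam β (-α - 1) (-1) y) := by
    filter_upwards [Ioi_mem_nhds hr] with y hy
    exact (hD0 y hy).deriv
  have E2 : deriv (fun y : ℝ => β * stmt7T lam (β - 1) (-α) 0 y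
          + (-α) * stmt7T lam β (-α - 1) (-1) y)
      =ᶠ[nhds r] (fun y : ℝ => β * (β - 1) * stmt7T lam (β - 2) (-α) 0 y
          + (-(2 * α * β)) * stmt7T lam (β - 1) (-α - 1) (-1) y
          + α * (α + 1) * stmt7T lam β (-α - 2) (-2) y
          + α * stmt7T lam β (-α - 1) (-2) y) := by
    filter_upwards [Ioi_mem_nhds hr] with y hy
    exact (hD1 y hy).deriv
  have E4 : deriv (deriv (fun y : ℝ => y ^ β / (Real.log (lam + y)) ^ α))
      =ᶠ[nhds r] (fun y : ℝ => β * (β - 1) * stmt7T lam (β - 2) (-α) 0 y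
          + (-(2 * α * β)) * stmt7T lam (β - 1) (-α - 1) (-1) y
          + α * (α + 1) * stmt7T lam β (-α - 2) (-2) y
          + α * stmt7T lam β (-α - 1) (-2) y) := E1.deriv.trans E2
  have E5 : deriv (deriv (deriv (fun y : ℝ => y ^ β / (Real.log (lam + y)) ^ α))) r
      = β * (β - 1) * (β - 2) * stmt7T lam (β - 3) (-α) 0 r
          + (-(3 * α * β * (β - 1))) * stmt7T lam (β - 2) (-α - 1) (-1) r
          + 3 * α * β * (α + 1) * stmt7T lam (β - 1) (-α - 2) (-2) r
          + 3 * α * β * stmt7T lam (β - 1) (-α - 1) (-2) r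
          + (-(α * (α + 1) * (α + 2))) * stmt7T lam β (-α - 3) (-3) r
          + (-(3 * α * (α + 1))) * stmt7T lam β (-α - 2) (-3) r
          + (-(2 * α)) * stmt7T lam β (-α - 1) (-3) r := by
    rw [E4.deriv_eq]
    exact (hD2 r hr).deriv
  rw [E5]
  -- now positivity of the explicit third derivative
  set u : ℝ := lam + r with hudef
  set L : ℝ := Real.log u with hLdef
  clear_value L
  clear_value u
  have hu0 : (0:ℝ) < u := by rw [hudef]; linarith
  have hur : r < u := by rw [hudef]; linarith
  have hβL : 3 + 2 * α ≤ β * L := by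
    have h1 : Real.exp ((3 + 2 * α) / β) ≤ u := by rw [hudef]; linarith
    have h2 : (3 + 2 * α) / β ≤ L := by
      rw [hLdef]
      exact (Real.le_log_iff_exp_le hu0).mpr h1
    calc 3 + 2 * α = ((3 + 2 * α) / β) * β := by field_simp
    _ ≤ L * β := mul_le_mul_of_nonneg_right h2 hβ0.le
    _ = β * L := mul_comm _ _
  have hL0 : (0:ℝ) < L := by
    have : (0:ℝ) < (3 + 2 * α) / β := by positivity
    nlinarith
  -- splittings
  have hA : (0:ℝ) < r ^ (β - 3) := Real.rpow_pos_of_pos hr _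
  have hB : (0:ℝ) < L ^ (-α - 3) := Real.rpow_pos_of_pos hL0 _
  have hC : (0:ℝ) < u ^ (-3 : ℝ) := Real.rpow_pos_of_pos hu0 _
  have hrsplit : ∀ s : ℝ, r ^ (s + 1) = r ^ s * r := by
    intro s; rw [Real.rpow_add hr, Real.rpow_one]
  have hLsplit : ∀ s : ℝ, L ^ (s + 1) = L ^ s * L := by
    intro s; rw [Real.rpow_add hL0, Real.rpow_one]
  have husplit : ∀ s : ℝ, u ^ (s + 1) = u ^ s * u := by
    intro s; rw [Real.rpow_add hu0, Real.rpow_one]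
  have er2 : r ^ (β - 2) = r ^ (β - 3) * r := by
    rw [show β - 2 = (β - 3) + 1 by ring, hrsplit]
  have er1 : r ^ (β - 1) = r ^ (β - 3) * r * r := by
    rw [show β - 1 = (β - 3) + 1 + 1 by ring, hrsplit, hrsplit]
  have er0 : r ^ β = r ^ (β - 3) * r * r * r := by
    rw [← hrsplit, ← hrsplit, ← hrsplit, show β - 3 + 1 + 1 + 1 = β by ring]
  have eL2 : L ^ (-α - 2) = L ^ (-α - 3) * L := by
    rw [show -α - 2 = (-α - 3) + 1 by ring, hLsplit]
  have eL1 : L ^ (-α - 1) = L ^ (-α - 3) * L * L := by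
    rw [show -α - 1 = (-α - 3) + 1 + 1 by ring, hLsplit, hLsplit]
  have eL0 : L ^ (-α : ℝ) = L ^ (-α - 3) * L * L * L := by
    rw [← hLsplit, ← hLsplit, ← hLsplit, show -α - 3 + 1 + 1 + 1 = -α by ring]
  have eu2 : u ^ (-2 : ℝ) = u ^ (-3 : ℝ) * u := by
    rw [← husplit, show (-3:ℝ) + 1 = -2 by norm_num]
  have eu1 : u ^ (-1 : ℝ) = u ^ (-3 : ℝ) * u * u := by
    rw [← husplit, ← husplit, show (-3:ℝ) + 1 + 1 = -1 by norm_num]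
  have eu0 : u ^ (0 : ℝ) = u ^ (-3 : ℝ) * u * u * u := by
    rw [← husplit, ← husplit, ← husplit, show (-3:ℝ) + 1 + 1 + 1 = 0 by norm_num]
  -- polynomial inequality
  have hP := stmt7_keyP α β L hα hβ0 hβ1 hβL
  have hQ : 0 ≤ β * (β - 1) * (β - 2) * (L * L * L) * (u * u * u)
      + (-(3 * α * β * (β - 1))) * r * (L * L) * (u * u)
      + 3 * α * β * (α + 1) * (r * r) * L * u
      + 3 * α * β * (r * r) * (L * L) * u
      + (-(α * (α + 1) * (α + 2))) * (r * r * r)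
      + (-(3 * α * (α + 1))) * (r * r * r) * L
      + (-(2 * α)) * (r * r * r) * (L * L) := by
    have t1 : 0 ≤ β * (1 - β) * (2 - β) * (L ^ 3 * (u ^ 3 - r ^ 3)) := by
      have h1 : 0 ≤ β * (1 - β) * (2 - β) := by
        apply mul_nonneg (mul_nonneg hβ0.le (by linarith)) (by linarith)
      have h2 : r ^ 3 ≤ u ^ 3 := pow_le_pow_left₀ hr.le hur.le 3
      exact mul_nonneg h1 (mul_nonneg (by positivity) (by linarith))
    have t2 : 0 ≤ 3 * α * β * (1 - β) * (r * L ^ 2 * (u ^ 2 - r ^ 2)) := by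
      have h1 : 0 ≤ 3 * α * β * (1 - β) := by
        apply mul_nonneg (by positivity) (by linarith)
      have h2 : r ^ 2 ≤ u ^ 2 := pow_le_pow_left₀ hr.le hur.le 2
      exact mul_nonneg h1 (mul_nonneg (by positivity) (by linarith))
    have t3 : 0 ≤ 3 * α * β * (α + 1) * (r ^ 2 * L * (u - r)) := by
      have : 0 ≤ u - r := by linarith
      positivity
    have t4 : 0 ≤ 3 * α * β * (r ^ 2 * L ^ 2 * (u - r)) := by
      have : 0 ≤ u - r := by linarith
      positivity
    have t5 : 0 ≤ r ^ 3 * (β * (1 - β) * (2 - β) * L ^ 3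
        + (6 * α * β - 3 * α * β ^ 2 - 2 * α) * L ^ 2
        - 3 * α * (α + 1) * (1 - β) * L - α * (α + 1) * (α + 2)) :=
      mul_nonneg (by positivity) hP
    linarith [t1, t2, t3, t4, t5]
  unfold stmt7T
  rw [← hudef, ← hLdef, er2, er1, er0, eL2, eL1, eL0, eu2, eu1, eu0]
  calc (0:ℝ) ≤ r ^ (β - 3) * L ^ (-α - 3) * u ^ (-3 : ℝ)
      * (β * (β - 1) * (β - 2) * (L * L * L) * (u * u * u)
        + (-(3 * α * β * (β - 1))) * r * (L * L) * (u * u)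
        + 3 * α * β * (α + 1) * (r * r) * L * u
        + 3 * α * β * (r * r) * (L * L) * u
        + (-(α * (α + 1) * (α + 2))) * (r * r * r)
        + (-(3 * α * (α + 1))) * (r * r * r) * L
        + (-(2 * α)) * (r * r * r) * (L * L)) := by positivity
  _ = _ := by ring
end
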